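/- If f ∈ K(x)\K is such that the extension K(f) ⊆ K(x) is separable and normal, then |Γ_K(f)| = deg f. -/

import Mathlib

open Polynomial

/-- Composition of rational functions: `ratComp g h = g ∘ h = g(h)`. -/
noncomputable def ratComp {K : Type*} [Field K] (g h : RatFunc K) : RatFunc K :=
  RatFunc.eval (algebraMap K (RatFunc K)) h g

/-- Degree of a rational function `f = f_N / f_D` in lowest terms:
`max (deg f_N) (deg f_D)`. -/
noncomputable def ratDeg {K : Type*} [Field K] (f : RatFunc K) : ℕ :=
  max f.num.natDegree f.denom.natDegree

/-- The fixing group of `f`: Möbius transformations (degree-1 rational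
functions) `u` with `f ∘ u = f`. -/
noncomputable def fixGroup {K : Type*} [Field K] (f : RatFunc K) : Set (RatFunc K) :=
  {u | ratDeg u = 1 ∧ ratComp f u = f}


namespace FixAux

variable {K : Type*} [Field K]

theorem aeval_ratFunc_X (p : Polynomial K) :
    Polynomial.aeval (RatFunc.X : RatFunc K) p = algebraMap (Polynomial K) (RatFunc K) p := by
  have h := Polynomial.aeval_algHom_apply
    (IsScalarTower.toAlgHom K (Polynomial K) (RatFunc K)) Polynomial.X p
  simpa [RatFunc.algebraMap_X] using h

theorem poly_mem_subfield (S : Subfield (RatFunc K)) (hX : RatFunc.X ∈ S)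
    (hC : ∀ c : K, algebraMap K (RatFunc K) c ∈ S) (p : Polynomial K) :
    algebraMap (Polynomial K) (RatFunc K) p ∈ S := by
  induction p using Polynomial.induction_on' with
  | add p q hp hq => rw [map_add]; exact S.add_mem hp hq
  | monomial n a =>
    rw [← Polynomial.C_mul_X_pow_eq_monomial, map_mul, map_pow, RatFunc.algebraMap_C,
      RatFunc.algebraMap_X]
    exact S.mul_mem (by simpa [RatFunc.algebraMap_eq_C] using hC a) (S.pow_mem hX n)

theorem mem_subfield (S : Subfield (RatFunc K)) (hX : RatFunc.X ∈ S)
    (hC : ∀ c : K, algebraMap K (RatFunc K) c ∈ S) (g : RatFunc K) : g ∈ S := by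
  rw [← RatFunc.num_div_denom g]
  exact S.div_mem (poly_mem_subfield S hX hC _) (poly_mem_subfield S hX hC _)

theorem adjoin_X_eq_top (F : Type*) [Field F] [Algebra F (RatFunc K)]
    (hC : ∀ c : K, algebraMap K (RatFunc K) c ∈
      IntermediateField.adjoin F {(RatFunc.X : RatFunc K)}) :
    IntermediateField.adjoin F {(RatFunc.X : RatFunc K)} = ⊤ := by
  rw [eq_top_iff]
  intro g _
  exact mem_subfield (IntermediateField.adjoin F {(RatFunc.X : RatFunc K)}).toSubfield
    (IntermediateField.mem_adjoin_simple_self F _) hC g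

theorem aeval_mem {E : Type*} [Field E] [Algebra K E] (S : IntermediateField K E)
    {y : E} (hy : y ∈ S) (p : Polynomial K) : Polynomial.aeval y p ∈ S := by
  have h := Polynomial.aeval_algHom_apply (IsScalarTower.toAlgHom K S E) (⟨y, hy⟩ : S) p
  simp only [IsScalarTower.coe_toAlgHom'] at h
  rw [show (algebraMap S E ⟨y, hy⟩ : E) = y from rfl] at h
  rw [h]
  exact Subtype.coe_prop _

end FixAux

namespace FixAux2
open FixAux

variable {K : Type*} [Field K]

theorem max_natDegree_eq_zero_of_mem_range {f : RatFunc K}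
    (h : f ∈ Set.range (algebraMap K (RatFunc K))) :
    max f.num.natDegree f.denom.natDegree = 0 := by
  obtain ⟨c, rfl⟩ := h
  rw [RatFunc.algebraMap_eq_C, RatFunc.num_C, RatFunc.denom_C]
  simp

theorem not_mem_range_X : (RatFunc.X : RatFunc K) ∉ Set.range (algebraMap K (RatFunc K)) := by
  intro h
  have := max_natDegree_eq_zero_of_mem_range h
  rw [RatFunc.num_X] at this
  simp at this

theorem transcendental_ratFunc_X : Transcendental K (RatFunc.X : RatFunc K) := by
  intro h
  obtain ⟨p, hp, hfp⟩ := h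
  rw [aeval_ratFunc_X] at hfp
  exact RatFunc.algebraMap_ne_zero hp hfp

/-- `X` is algebraic over `K(f)` whenever `f` is not constant. -/
theorem isAlgebraic_adjoin_X {f : RatFunc K}
    (hf : f ∉ Set.range (algebraMap K (RatFunc K))) :
    IsAlgebraic (IntermediateField.adjoin K {f}) (RatFunc.X : RatFunc K) := by
  set L := IntermediateField.adjoin K {f}
  set fL : L := ⟨f, IntermediateField.mem_adjoin_simple_self K f⟩ with hfL
  set M : Polynomial L := f.num.map (algebraMap K L)
      - Polynomial.C fL * f.denom.map (algebraMap K L) with hM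
  refine ⟨M, ?_, ?_⟩
  · intro h0
    have hcoeff : ∀ i, algebraMap K (RatFunc K) (f.num.coeff i)
        = f * algebraMap K (RatFunc K) (f.denom.coeff i) := by
      intro i
      have := congrArg (fun q => Polynomial.coeff q i) h0
      simp only [hM, Polynomial.coeff_sub, Polynomial.coeff_map, Polynomial.coeff_C_mul,
        Polynomial.coeff_zero, sub_eq_zero] at this
      have := congrArg (algebraMap L (RatFunc K)) this
      rw [map_mul] at this
      rw [← IsScalarTower.algebraMap_apply K L (RatFunc K),
        ← IsScalarTower.algebraMap_apply K L (RatFunc K)] at this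
      rw [this]
      rfl
    obtain ⟨i, hi⟩ : ∃ i, f.denom.coeff i ≠ 0 := by
      by_contra hall
      push_neg at hall
      exact f.denom_ne_zero (Polynomial.ext fun i => by simp [hall i])
    apply hf
    refine ⟨f.num.coeff i / f.denom.coeff i, ?_⟩
    rw [map_div₀, hcoeff i]
    rw [mul_div_assoc, div_self, mul_one]
    rw [RatFunc.algebraMap_eq_C]
    simpa using hi
  · rw [hM, map_sub, map_mul]
    simp only [Polynomial.aeval_map_algebraMap, Polynomial.aeval_C]
    rw [aeval_ratFunc_X, aeval_ratFunc_X]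
    have : (algebraMap L (RatFunc K)) fL = f := rfl
    rw [this, sub_eq_zero]
    have h2 := RatFunc.num_div_denom f
    rw [div_eq_iff (RatFunc.algebraMap_ne_zero f.denom_ne_zero)] at h2
    rw [h2]

theorem transcendental_of_not_mem_range {f : RatFunc K}
    (hf : f ∉ Set.range (algebraMap K (RatFunc K))) : Transcendental K f := by
  intro halg
  set L := IntermediateField.adjoin K {f}
  haveI : FiniteDimensional K L :=
    IntermediateField.adjoin.finiteDimensional halg.isIntegral
  haveI : Algebra.IsIntegral K L := Algebra.IsIntegral.of_finite K L
  have hX := isAlgebraic_adjoin_X hf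
  have : IsIntegral K (RatFunc.X : RatFunc K) :=
    isIntegral_trans _ hX.isIntegral
  exact transcendental_ratFunc_X this.isAlgebraic

end FixAux2

namespace FixAux3
open FixAux FixAux2

variable {K : Type*} [Field K]

theorem irreducible_linear {R : Type*} [CommRing R] [IsDomain R] {a b : R} (hb : b ≠ 0)
    (hco : IsCoprime a b) :
    Irreducible (Polynomial.C a - Polynomial.C b * Polynomial.X) := by
  have hdeg : (Polynomial.C a - Polynomial.C b * Polynomial.X).natDegree = 1 := by
    have : Polynomial.C a - Polynomial.C b * Polynomial.X
        = Polynomial.C (-b) * Polynomial.X + Polynomial.C a := by rw [map_neg]; ring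
    rw [this]
    exact Polynomial.natDegree_linear (neg_ne_zero.mpr hb)
  have hne : (Polynomial.C a - Polynomial.C b * Polynomial.X) ≠ 0 := by
    intro h; rw [h] at hdeg; simp at hdeg
  have hcoeff0 : (Polynomial.C a - Polynomial.C b * Polynomial.X).coeff 0 = a := by
    simp
  have hcoeff1 : (Polynomial.C a - Polynomial.C b * Polynomial.X).coeff 1 = -b := by
    simp
  constructor
  · exact Polynomial.not_isUnit_of_natDegree_pos _ (by omega)
  · intro u v huv
    have hu0 : u ≠ 0 := fun h => hne (by rw [huv, h, zero_mul])
    have hv0 : v ≠ 0 := fun h => hne (by rw [huv, h, mul_zero])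
    have hsum : u.natDegree + v.natDegree = 1 := by
      rw [← Polynomial.natDegree_mul hu0 hv0, ← huv, hdeg]
    rcases Nat.eq_zero_or_pos u.natDegree with h0 | hpos
    · left
      obtain ⟨c, hc⟩ := Polynomial.natDegree_eq_zero.mp h0
      have hca : c ∣ a := by
        refine ⟨v.coeff 0, ?_⟩
        have := congrArg (fun p => Polynomial.coeff p 0) huv
        simpa [hcoeff0, ← hc, Polynomial.coeff_C_mul] using this
      have hcb : c ∣ b := by
        refine ⟨-v.coeff 1, ?_⟩
        have := congrArg (fun p => Polynomial.coeff p 1) huv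
        simp [hcoeff1, ← hc, Polynomial.coeff_C_mul] at this
        rw [← neg_eq_iff_eq_neg.mpr this.symm]
        ring
      rw [← hc]
      exact Polynomial.isUnit_C.mpr (hco.isUnit_of_dvd' hca hcb)
    · right
      have h0 : v.natDegree = 0 := by omega
      obtain ⟨c, hc⟩ := Polynomial.natDegree_eq_zero.mp h0
      have hca : c ∣ a := by
        refine ⟨u.coeff 0, ?_⟩
        have := congrArg (fun p => Polynomial.coeff p 0) huv
        simp [hcoeff0, ← hc, Polynomial.coeff_mul_C] at this
        rw [this]; ring
      have hcb : c ∣ b := by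
        refine ⟨-u.coeff 1, ?_⟩
        have := congrArg (fun p => Polynomial.coeff p 1) huv
        simp [hcoeff1, ← hc, Polynomial.coeff_mul_C] at this
        rw [← neg_eq_iff_eq_neg.mpr this.symm]
        ring
      rw [← hc]
      exact Polynomial.isUnit_C.mpr (hco.isUnit_of_dvd' hca hcb)

/-- The swap homomorphism `K[t][s] → K[t][s]` exchanging the roles of the two variables. -/
noncomputable def swapPoly : Polynomial (Polynomial K) →+* Polynomial (Polynomial K) :=
  Polynomial.eval₂RingHom (Polynomial.mapRingHom (Polynomial.C : K →+* Polynomial K))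
    (Polynomial.C Polynomial.X)

@[simp] theorem swapPoly_C (p : Polynomial K) :
    (swapPoly (Polynomial.C p) : Polynomial (Polynomial K)) = p.map Polynomial.C := by
  simp [swapPoly]

@[simp] theorem swapPoly_X :
    (swapPoly (Polynomial.X : Polynomial (Polynomial K))) = Polynomial.C Polynomial.X := by
  simp [swapPoly]

theorem swapPoly_comp_swapPoly :
    (swapPoly : Polynomial (Polynomial K) →+* _).comp swapPoly = RingHom.id _ := by
  apply Polynomial.ringHom_ext'
  · apply Polynomial.ringHom_ext'
    · ext k
      simp [swapPoly]
    · simp [swapPoly]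
  · simp [swapPoly]

/-- swap as ring equivalence. -/
noncomputable def swapPolyEquiv : Polynomial (Polynomial K) ≃+* Polynomial (Polynomial K) :=
  RingEquiv.ofRingHom (swapPoly : Polynomial (Polynomial K) →+* _) swapPoly
    swapPoly_comp_swapPoly swapPoly_comp_swapPoly

theorem irreducible_swap (p : Polynomial (Polynomial K)) (h : Irreducible p) :
    Irreducible (swapPoly p) := by
  have : swapPoly p = swapPolyEquiv p := rfl
  rw [this]
  exact (MulEquiv.irreducible_iff
    (swapPolyEquiv : Polynomial (Polynomial K) ≃+* Polynomial (Polynomial K))).mpr h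

end FixAux3

namespace FixAux4
open FixAux FixAux2 FixAux3

variable {K : Type*} [Field K]

/-- The polynomial `f_N(T) - Y f_D(T)` in `K[Y][T]`. -/
noncomputable def charQ (f : RatFunc K) : Polynomial (Polynomial K) :=
  f.num.map (Polynomial.C : K →+* Polynomial K)
    - Polynomial.C Polynomial.X * f.denom.map (Polynomial.C : K →+* Polynomial K)

theorem charQ_coeff (f : RatFunc K) (i : ℕ) :
    (charQ f).coeff i
      = Polynomial.C (f.num.coeff i) - Polynomial.X * Polynomial.C (f.denom.coeff i) := by
  rw [charQ, Polynomial.coeff_sub, Polynomial.coeff_map, Polynomial.coeff_C_mul,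
    Polynomial.coeff_map]

theorem charQ_irreducible (f : RatFunc K) : Irreducible (charQ f) := by
  have h := irreducible_swap (Polynomial.C f.num - Polynomial.C f.denom * Polynomial.X)
    (irreducible_linear f.denom_ne_zero (RatFunc.isCoprime_num_denom f))
  have heq : swapPoly (Polynomial.C f.num - Polynomial.C f.denom * Polynomial.X) = charQ f := by
    rw [map_sub, map_mul, swapPoly_C, swapPoly_C, swapPoly_X, charQ]
    ring
  rwa [heq] at h

theorem charQ_coeff_ne_zero {f : RatFunc K} (hf0 : f ≠ 0) :
    (charQ f).coeff (max f.num.natDegree f.denom.natDegree) ≠ 0 := by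
  set n := max f.num.natDegree f.denom.natDegree
  have hab : f.num.coeff n ≠ 0 ∨ f.denom.coeff n ≠ 0 := by
    rcases max_cases f.num.natDegree f.denom.natDegree with ⟨h1, _⟩ | ⟨h1, _⟩
    · left; rw [show n = f.num.natDegree from h1]
      exact Polynomial.leadingCoeff_ne_zero.mpr (RatFunc.num_ne_zero hf0)
    · right; rw [show n = f.denom.natDegree from h1]
      exact Polynomial.leadingCoeff_ne_zero.mpr f.denom_ne_zero
  rw [charQ_coeff]
  intro h
  rw [sub_eq_zero, mul_comm] at h
  have h0 := congrArg (fun p => Polynomial.coeff p 0) h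
  have h1 := congrArg (fun p => Polynomial.coeff p 1) h
  simp only [Polynomial.coeff_C_mul, Polynomial.coeff_C, Polynomial.coeff_X_zero,
    Polynomial.coeff_X_one, mul_zero, mul_one] at h0 h1
  have ha : f.num.coeff n = 0 := by simpa using h0
  have hbz : f.denom.coeff n = 0 := by simpa using h1.symm
  rcases hab with h' | h'
  exacts [h' ha, h' hbz]

theorem charQ_natDegree {f : RatFunc K} (hf0 : f ≠ 0) :
    (charQ f).natDegree = max f.num.natDegree f.denom.natDegree := by
  apply le_antisymm
  · rw [Polynomial.natDegree_le_iff_coeff_eq_zero]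
    intro N hN
    rw [charQ_coeff, Polynomial.coeff_eq_zero_of_natDegree_lt, Polynomial.coeff_eq_zero_of_natDegree_lt]
    · simp
    · omega
    · omega
  · exact Polynomial.le_natDegree_of_ne_zero (charQ_coeff_ne_zero hf0)

theorem charQ_ne_zero {f : RatFunc K} (hf0 : f ≠ 0) : charQ f ≠ 0 := fun h =>
  charQ_coeff_ne_zero hf0 (by rw [h]; simp)

theorem charQ_isPrimitive {f : RatFunc K}
    (hf : f ∉ Set.range (algebraMap K (RatFunc K))) : (charQ f).IsPrimitive := by
  intro r hr
  obtain ⟨q, hq⟩ := hr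
  have hcoeff : ∀ i, (charQ f).coeff i = r * q.coeff i := by
    intro i
    rw [hq, Polynomial.coeff_C_mul]
  by_cases hprop : ∀ i j, f.num.coeff i * f.denom.coeff j = f.num.coeff j * f.denom.coeff i
  · exfalso
    obtain ⟨k, hk⟩ : ∃ k, f.denom.coeff k ≠ 0 := by
      by_contra hall
      push_neg at hall
      exact f.denom_ne_zero (Polynomial.ext fun i => by simp [hall i])
    apply hf
    refine ⟨f.num.coeff k / f.denom.coeff k, ?_⟩
    have hpoly : Polynomial.C (f.denom.coeff k) * f.num
        = Polynomial.C (f.num.coeff k) * f.denom := by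
      ext i
      simp only [Polynomial.coeff_C_mul]
      rw [mul_comm (f.denom.coeff k), hprop i k, mul_comm]
    have hthis := congrArg (algebraMap (Polynomial K) (RatFunc K)) hpoly
    rw [map_mul, map_mul, RatFunc.algebraMap_C, RatFunc.algebraMap_C] at hthis
    have hb' : (RatFunc.C (f.denom.coeff k)) ≠ 0 :=
      fun h => hk (by simpa using congrArg RatFunc.num h)
    have hden := RatFunc.algebraMap_ne_zero (K := K) f.denom_ne_zero
    have hf' : f * algebraMap (Polynomial K) (RatFunc K) f.denom
        = algebraMap (Polynomial K) (RatFunc K) f.num :=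
      ((div_eq_iff hden).mp (RatFunc.num_div_denom f)).symm
    rw [map_div₀, RatFunc.algebraMap_eq_C, div_eq_iff hb']
    apply mul_right_cancel₀ hden
    calc RatFunc.C (f.num.coeff k) * algebraMap (Polynomial K) (RatFunc K) f.denom
        = RatFunc.C (f.denom.coeff k) * algebraMap (Polynomial K) (RatFunc K) f.num :=
          hthis.symm
      _ = RatFunc.C (f.denom.coeff k)
            * (f * algebraMap (Polynomial K) (RatFunc K) f.denom) := by rw [hf']
      _ = f * RatFunc.C (f.denom.coeff k)
            * algebraMap (Polynomial K) (RatFunc K) f.denom := by ring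
  · push_neg at hprop
    obtain ⟨i, j, hij⟩ := hprop
    have hdvd : r ∣
        Polynomial.C (f.denom.coeff j) * (charQ f).coeff i
          - Polynomial.C (f.denom.coeff i) * (charQ f).coeff j := by
      refine dvd_sub ?_ ?_
      · rw [hcoeff i]; exact Dvd.dvd.mul_left ⟨q.coeff i, rfl⟩ _
      · rw [hcoeff j]; exact Dvd.dvd.mul_left ⟨q.coeff j, rfl⟩ _

    have hval : Polynomial.C (f.denom.coeff j) * (charQ f).coeff i
          - Polynomial.C (f.denom.coeff i) * (charQ f).coeff j
        = Polynomial.C (f.denom.coeff j * f.num.coeff i - f.denom.coeff i * f.num.coeff j) := by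
      rw [charQ_coeff, charQ_coeff, map_sub, map_mul, map_mul]
      ring
    rw [hval] at hdvd
    have hC : IsUnit (Polynomial.C (f.denom.coeff j * f.num.coeff i
        - f.denom.coeff i * f.num.coeff j)) := by
      rw [Polynomial.isUnit_C]
      rw [isUnit_iff_ne_zero]
      intro h
      apply hij
      have : f.denom.coeff j * f.num.coeff i = f.denom.coeff i * f.num.coeff j := by
        linear_combination h
      linear_combination this
    exact isUnit_of_dvd_unit hdvd hC

end FixAux4

namespace FixAux5
open FixAux FixAux2 FixAux3 FixAux4
variable {K : Type*} [Field K]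

/-- Substitution `g ↦ g(u)` as a `K`-algebra endomorphism of `RatFunc K`,
for `u` transcendental. -/
noncomputable def subst {u : RatFunc K} (hu : Transcendental K u) :
    RatFunc K →ₐ[K] RatFunc K :=
  RatFunc.liftAlgHom (Polynomial.aeval u)
    (nonZeroDivisors_le_comap_nonZeroDivisors_of_injective _
      (transcendental_iff_injective.mp hu))

theorem subst_algebraMap {u : RatFunc K} (hu : Transcendental K u) (p : Polynomial K) :
    subst hu (algebraMap (Polynomial K) (RatFunc K) p) = Polynomial.aeval u p := by
  have h := RatFunc.liftAlgHom_apply_div (φ := Polynomial.aeval u)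
    (hφ := nonZeroDivisors_le_comap_nonZeroDivisors_of_injective _
      (transcendental_iff_injective.mp hu)) p 1
  simpa [subst] using h

theorem subst_X {u : RatFunc K} (hu : Transcendental K u) : subst hu RatFunc.X = u := by
  rw [← RatFunc.algebraMap_X, subst_algebraMap hu]
  simp

end FixAux5

namespace FixAux5
open FixAux FixAux2 FixAux3 FixAux4

variable {K : Type*} [Field K]

theorem algHom_apply_eq (χ : RatFunc K →ₐ[K] RatFunc K) (g : RatFunc K) :
    χ g = Polynomial.aeval (χ RatFunc.X) g.num / Polynomial.aeval (χ RatFunc.X) g.denom := by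
  conv_lhs => rw [← RatFunc.num_div_denom g]
  rw [map_div₀]
  congr 1 <;>
  · rw [← aeval_ratFunc_X, ← Polynomial.aeval_algHom_apply]

/-- The key degree computation: `[K(x) : K(f)] = max(deg num f, deg denom f)`. -/
theorem finrank_adjoin {f : RatFunc K} (hf : f ∉ Set.range (algebraMap K (RatFunc K))) :
    Module.finrank (IntermediateField.adjoin K {f}) (RatFunc K)
      = max f.num.natDegree f.denom.natDegree := by
  have hf0 : f ≠ 0 := fun h => hf ⟨0, by rw [h, map_zero]⟩
  set L := IntermediateField.adjoin K {f} with hL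
  have htr : Transcendental K f := transcendental_of_not_mem_range hf
  set φ₀ : RatFunc K →ₐ[K] RatFunc K := subst htr with hφ₀
  have hφ₀p : ∀ p, φ₀ (algebraMap (Polynomial K) (RatFunc K) p) = Polynomial.aeval f p :=
    subst_algebraMap htr
  have hφ₀X : φ₀ RatFunc.X = f := subst_X htr
  have hmem : ∀ g, φ₀ g ∈ L := by
    intro g
    rw [algHom_apply_eq φ₀ g, hφ₀X]
    exact L.div_mem
      (aeval_mem L (IntermediateField.mem_adjoin_simple_self K f) _)
      (aeval_mem L (IntermediateField.mem_adjoin_simple_self K f) _)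
  set ψ : RatFunc K →ₐ[K] L :=
    { toFun := fun g => ⟨φ₀ g, hmem g⟩
      map_one' := Subtype.ext (map_one φ₀)
      map_mul' := fun a b => Subtype.ext (map_mul φ₀ a b)
      map_zero' := Subtype.ext (map_zero φ₀)
      map_add' := fun a b => Subtype.ext (map_add φ₀ a b)
      commutes' := fun c => Subtype.ext (by simpa using φ₀.commutes c) } with hψ
  have hψval : ∀ g, (ψ g : RatFunc K) = φ₀ g := fun g => rfl
  have hsurj : Function.Surjective ψ := by
    intro y
    have hle : L ≤ φ₀.fieldRange := by
      rw [hL, IntermediateField.adjoin_le_iff]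
      rintro x hx
      rw [Set.mem_singleton_iff] at hx
      exact ⟨RatFunc.X, hx ▸ hφ₀X⟩
    obtain ⟨g, hg⟩ := hle y.2
    exact ⟨g, Subtype.ext hg⟩
  have hinjψ : Function.Injective ψ := fun a b hab =>
    φ₀.toRingHom.injective (congrArg Subtype.val hab)
  set e : RatFunc K ≃ₐ[K] L := AlgEquiv.ofBijective ψ ⟨hinjψ, hsurj⟩ with he
  have heval : ∀ g, ((e g : L) : RatFunc K) = φ₀ g := fun g => rfl
  set E : RatFunc K ≃+* L := e.toRingEquiv with hE
  set ρ : Polynomial K →+* L :=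
    (E : RatFunc K →+* L).comp (algebraMap (Polynomial K) (RatFunc K)) with hρ
  have hρinj : Function.Injective ρ :=
    E.injective.comp (IsFractionRing.injective (Polynomial K) (RatFunc K))
  set P1 : Polynomial L := (charQ f).map ρ with hP1
  have hIrr : Irreducible P1 := by
    letI : DecidableEq K := Classical.decEq K
    have h0 : Irreducible ((charQ f).map (algebraMap (Polynomial K) (RatFunc K))) :=
      ((charQ_isPrimitive hf).irreducible_iff_irreducible_map_fraction_map).mp
        (charQ_irreducible f)
    have hmm : P1 = ((charQ f).map (algebraMap (Polynomial K) (RatFunc K))).map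
        (E : RatFunc K →+* L) := by
      rw [hP1, Polynomial.map_map, hρ]
    rw [hmm, ← Polynomial.mapEquiv_apply]
    exact (MulEquiv.irreducible_iff (Polynomial.mapEquiv E)).mpr h0
  have hroot : Polynomial.aeval (RatFunc.X : RatFunc K) P1 = 0 := by
    rw [hP1, Polynomial.aeval_def, Polynomial.eval₂_map]
    have hτ : (algebraMap L (RatFunc K)).comp ρ
        = ((Polynomial.aeval f : Polynomial K →ₐ[K] RatFunc K) : Polynomial K →+* RatFunc K) := by
      apply Polynomial.ringHom_ext'
      · ext k
        show (algebraMap L (RatFunc K))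
            (E ((algebraMap (Polynomial K) (RatFunc K)) (Polynomial.C k))) = _
        rw [show (algebraMap L (RatFunc K))
            (E ((algebraMap (Polynomial K) (RatFunc K)) (Polynomial.C k)))
          = φ₀ ((algebraMap (Polynomial K) (RatFunc K)) (Polynomial.C k)) from rfl, hφ₀p]
        simp
      · show (algebraMap L (RatFunc K))
            (E ((algebraMap (Polynomial K) (RatFunc K)) Polynomial.X)) = _
        rw [show (algebraMap L (RatFunc K))
            (E ((algebraMap (Polynomial K) (RatFunc K)) Polynomial.X))
          = φ₀ ((algebraMap (Polynomial K) (RatFunc K)) Polynomial.X) from rfl, hφ₀p]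
        simp
    rw [hτ]
    rw [charQ, Polynomial.eval₂_sub, Polynomial.eval₂_mul, Polynomial.eval₂_map,
      Polynomial.eval₂_map, Polynomial.eval₂_C]
    have hcomp : (((Polynomial.aeval f : Polynomial K →ₐ[K] RatFunc K) :
        Polynomial K →+* RatFunc K)).comp (Polynomial.C : K →+* Polynomial K)
        = algebraMap K (RatFunc K) := by
      ext1 k
      simp
    rw [hcomp]
    rw [show Polynomial.eval₂ (algebraMap K (RatFunc K)) RatFunc.X f.num
        = Polynomial.aeval RatFunc.X f.num from rfl,
      show Polynomial.eval₂ (algebraMap K (RatFunc K)) RatFunc.X f.denom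
        = Polynomial.aeval RatFunc.X f.denom from rfl,
      aeval_ratFunc_X, aeval_ratFunc_X]
    rw [show ((Polynomial.aeval f : Polynomial K →ₐ[K] RatFunc K) :
        Polynomial K →+* RatFunc K) Polynomial.X = f by simp]
    rw [sub_eq_zero]
    exact (div_eq_iff (RatFunc.algebraMap_ne_zero f.denom_ne_zero)).mp
      (RatFunc.num_div_denom f)
  have hP1ne : P1 ≠ 0 := fun h =>
    charQ_ne_zero hf0 ((Polynomial.map_eq_zero_iff hρinj).mp h)
  have hdegP1 : P1.natDegree = max f.num.natDegree f.denom.natDegree := by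
    rw [hP1, Polynomial.natDegree_map_eq_of_injective hρinj, charQ_natDegree hf0]
  have hmin := minpoly.eq_of_irreducible hIrr hroot
  have hXint : IsIntegral L (RatFunc.X : RatFunc K) :=
    IsAlgebraic.isIntegral ⟨P1, hP1ne, hroot⟩
  have hadj : IntermediateField.adjoin L {(RatFunc.X : RatFunc K)} = ⊤ :=
    adjoin_X_eq_top L (fun c => by
      rw [IsScalarTower.algebraMap_apply K L (RatFunc K)]
      exact IntermediateField.algebraMap_mem _ _)
  have h1 := IntermediateField.adjoin.finrank hXint
  rw [hadj] at h1
  have h2 : Module.finrank L (RatFunc K)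
      = Module.finrank L ((⊤ : IntermediateField L (RatFunc K))) :=
    (IntermediateField.topEquiv (F := L) (E := RatFunc K)).toLinearEquiv.finrank_eq.symm
  rw [h2, h1, ← hmin]
  have hlc : P1.leadingCoeff⁻¹ ≠ 0 :=
    inv_ne_zero (Polynomial.leadingCoeff_ne_zero.mpr hP1ne)
  rw [Polynomial.natDegree_mul hP1ne (fun h => hlc (by simpa using h)), hdegP1,
    Polynomial.natDegree_C, add_zero]

/-- `K(x)` is finite-dimensional over `K(f)` for nonconstant `f`. -/
theorem finiteDimensional_adjoin {f : RatFunc K}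
    (hf : f ∉ Set.range (algebraMap K (RatFunc K))) :
    FiniteDimensional (IntermediateField.adjoin K {f}) (RatFunc K) := by
  set L := IntermediateField.adjoin K {f}
  have hX : IsAlgebraic L (RatFunc.X : RatFunc K) := isAlgebraic_adjoin_X hf
  have hXint := hX.isIntegral
  have hFD := IntermediateField.adjoin.finiteDimensional hXint
  have hadj : IntermediateField.adjoin L {(RatFunc.X : RatFunc K)} = ⊤ :=
    adjoin_X_eq_top L (fun c => by
      rw [IsScalarTower.algebraMap_apply K L (RatFunc K)]
      exact IntermediateField.algebraMap_mem _ _)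
  rw [hadj] at hFD
  exact (IntermediateField.topEquiv (F := L) (E := RatFunc K)).toLinearEquiv.finiteDimensional

end FixAux5


namespace FixAux6
open FixAux FixAux2 FixAux3 FixAux4 FixAux5

variable {K : Type*} [Field K]

theorem not_mem_range_of_ratDeg_pos {f : RatFunc K} (h : 0 < ratDeg f) :
    f ∉ Set.range (algebraMap K (RatFunc K)) := fun hm => by
  have := max_natDegree_eq_zero_of_mem_range hm
  rw [ratDeg] at h
  omega

theorem finrank_adjoin' {f : RatFunc K} (hf : f ∉ Set.range (algebraMap K (RatFunc K))) :
    Module.finrank (IntermediateField.adjoin K {f}) (RatFunc K) = ratDeg f :=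
  finrank_adjoin hf

theorem adjoin_eq_top_of_ratDeg_eq_one {u : RatFunc K} (h : ratDeg u = 1) :
    IntermediateField.adjoin K {u} = ⊤ := by
  have hu : u ∉ Set.range (algebraMap K (RatFunc K)) :=
    not_mem_range_of_ratDeg_pos (h ▸ one_pos)
  have hfr : Module.finrank (IntermediateField.adjoin K {u}) (RatFunc K) = 1 :=
    (finrank_adjoin' hu).trans h
  have hbt := Subalgebra.bot_eq_top_of_finrank_eq_one
    (F := IntermediateField.adjoin K {u}) (E := RatFunc K) hfr
  rw [eq_top_iff]
  intro g _
  have hg : g ∈ (⊤ : Subalgebra (IntermediateField.adjoin K {u}) (RatFunc K)) := trivial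
  rw [← hbt, Algebra.mem_bot] at hg
  obtain ⟨y, hy⟩ := hg
  rw [← hy]
  exact y.2

theorem ratDeg_eq_one_of_adjoin_eq_top {u : RatFunc K}
    (h : IntermediateField.adjoin K {u} = ⊤) : ratDeg u = 1 := by
  have hu : u ∉ Set.range (algebraMap K (RatFunc K)) := by
    intro hm
    have hb : u ∈ (⊥ : IntermediateField K (RatFunc K)) := IntermediateField.mem_bot.mpr hm
    have hle : (⊤ : IntermediateField K (RatFunc K)) ≤ ⊥ := by
      rw [← h, IntermediateField.adjoin_le_iff]
      exact Set.singleton_subset_iff.mpr hb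
    have hX := hle (IntermediateField.mem_top (x := (RatFunc.X : RatFunc K)))
    rw [IntermediateField.mem_bot] at hX
    exact not_mem_range_X hX
  have hfr := finrank_adjoin' hu
  rw [h, IntermediateField.finrank_top] at hfr
  exact hfr.symm

theorem ratComp_eq (g u : RatFunc K) :
    ratComp g u = Polynomial.aeval u g.num / Polynomial.aeval u g.denom := by
  rw [ratComp, RatFunc.eval, Polynomial.aeval_def, Polynomial.aeval_def]

theorem ratComp_algHom (χ : RatFunc K →ₐ[K] RatFunc K) (g : RatFunc K) :
    ratComp g (χ RatFunc.X) = χ g := by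
  rw [ratComp_eq, algHom_apply_eq χ g]

end FixAux6

open FixAux FixAux2 FixAux3 FixAux4 FixAux5 FixAux6 in
/-- If `K(f) ⊆ K(x)` is separable and normal, then `|Γ_K(f)| = deg f`. -/
theorem fixGroup_card_eq_of_normal {K : Type*} [Field K] (f : RatFunc K)
    (hf : 0 < ratDeg f)
    (hsep : Algebra.IsSeparable (IntermediateField.adjoin K {f}) (RatFunc K))
    (hnor : Normal (IntermediateField.adjoin K {f}) (RatFunc K)) :
    (fixGroup f).ncard = ratDeg f := by
  classical
  set L := IntermediateField.adjoin K {f} with hL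
  have hfr : f ∉ Set.range (algebraMap K (RatFunc K)) := not_mem_range_of_ratDeg_pos hf
  haveI : FiniteDimensional L (RatFunc K) := finiteDimensional_adjoin hfr
  haveI : IsGalois L (RatFunc K) := { to_isSeparable := hsep, to_normal := hnor }
  have hmemf : f ∈ L := IntermediateField.mem_adjoin_simple_self K f
  -- the map from the Galois group to the fixing group
  have hmem : ∀ σ : RatFunc K ≃ₐ[L] RatFunc K, σ RatFunc.X ∈ fixGroup f := by
    intro σ
    set χ : RatFunc K →ₐ[K] RatFunc K := (σ.restrictScalars K).toAlgHom with hχ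
    have hχX : χ RatFunc.X = σ RatFunc.X := rfl
    constructor
    · -- degree one
      apply ratDeg_eq_one_of_adjoin_eq_top
      rw [eq_top_iff]
      intro g _
      have hg : g = χ (σ.symm g) := ((σ.restrictScalars K).apply_symm_apply g).symm
      rw [hg, algHom_apply_eq χ]
      rw [hχX]
      exact IntermediateField.div_mem _
        (aeval_mem _ (IntermediateField.mem_adjoin_simple_self K _) _)
        (aeval_mem _ (IntermediateField.mem_adjoin_simple_self K _) _)
    · -- fixes f
      calc ratComp f (σ RatFunc.X) = χ f := ratComp_algHom χ f
        _ = f := σ.commutes ⟨f, hmemf⟩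
  have hinj : Function.Injective
      (fun σ : RatFunc K ≃ₐ[L] RatFunc K => σ RatFunc.X) := by
    intro σ τ h
    have h' : σ RatFunc.X = τ RatFunc.X := h
    apply AlgEquiv.ext
    intro g
    have e1 := algHom_apply_eq (σ.restrictScalars K).toAlgHom g
    have e2 := algHom_apply_eq (τ.restrictScalars K).toAlgHom g
    show σ g = τ g
    calc σ g = (σ.restrictScalars K).toAlgHom g := rfl
      _ = Polynomial.aeval (σ RatFunc.X) g.num / Polynomial.aeval (σ RatFunc.X) g.denom := e1
      _ = Polynomial.aeval (τ RatFunc.X) g.num / Polynomial.aeval (τ RatFunc.X) g.denom := by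
          rw [h']
      _ = (τ.restrictScalars K).toAlgHom g := e2.symm
      _ = τ g := rfl
  have hsurj : ∀ u ∈ fixGroup f, ∃ σ : RatFunc K ≃ₐ[L] RatFunc K, σ RatFunc.X = u := by
    rintro u ⟨hu1, hu2⟩
    have hur : u ∉ Set.range (algebraMap K (RatFunc K)) :=
      not_mem_range_of_ratDeg_pos (hu1 ▸ one_pos)
    have hutr : Transcendental K u := transcendental_of_not_mem_range hur
    set χ : RatFunc K →ₐ[K] RatFunc K := subst hutr with hχ
    have hχX : χ RatFunc.X = u := subst_X hutr
    have hχf : χ f = f := by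
      have h1 := ratComp_algHom χ f
      rw [hχX] at h1
      exact h1.symm.trans hu2
    have hbij : Function.Bijective χ := by
      constructor
      · exact χ.toRingHom.injective
      · intro g
        have hadj := adjoin_eq_top_of_ratDeg_eq_one hu1
        have hle : (⊤ : IntermediateField K (RatFunc K)) ≤ χ.fieldRange := by
          rw [← hadj, IntermediateField.adjoin_le_iff]
          intro x hx
          rw [Set.mem_singleton_iff] at hx
          exact ⟨RatFunc.X, hx ▸ hχX⟩
        obtain ⟨g', hg'⟩ := hle IntermediateField.mem_top
        exact ⟨g', hg'⟩
    set σK : RatFunc K ≃ₐ[K] RatFunc K := AlgEquiv.ofBijective χ hbij with hσK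
    have hfix : ∀ y : L, σK.toRingEquiv (algebraMap L (RatFunc K) y)
        = algebraMap L (RatFunc K) y := by
      rintro ⟨y, hy⟩
      show χ y = y
      induction hy using IntermediateField.adjoin_induction with
      | mem x hx =>
        rw [Set.mem_singleton_iff] at hx
        exact hx ▸ hχf
      | algebraMap c => exact χ.commutes c
      | add x y _ _ hx hy => rw [map_add, hx, hy]
      | inv x _ hx => rw [map_inv₀, hx]
      | mul x y _ _ hx hy => rw [map_mul, hx, hy]
    refine ⟨AlgEquiv.ofRingEquiv (f := σK.toRingEquiv) hfix, ?_⟩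
    exact hχX
  -- count
  have hbijm : Function.Bijective
      (fun σ : RatFunc K ≃ₐ[L] RatFunc K => (⟨σ RatFunc.X, hmem σ⟩ : fixGroup f)) := by
    constructor
    · intro σ τ h
      exact hinj (congrArg Subtype.val h)
    · rintro ⟨u, hu⟩
      obtain ⟨σ, hσ⟩ := hsurj u hu
      exact ⟨σ, Subtype.ext hσ⟩
  have hcard := Nat.card_congr (Equiv.ofBijective _ hbijm)
  rw [Nat.card_coe_set_eq] at hcard
  rw [← hcard, IsGalois.card_aut_eq_finrank]
  exact finrank_adjoin' hfr
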